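/- Suppose $\widetilde{K}: \mathbb{R}^N_{>0} \to \mathbb{R}^N$ is continuous with $|\widetilde{K}_i(r)| \leq C$ for all $r$ and $i$, and let $\tilde{\lambda}(r) = \sum_i \widetilde{K}_i r_i / \sum_i r_i$. Then for any initial value $r(0) \in \mathbb{R}^N_{>0}$, the ODE system $r_i' = (\tilde{\lambda}(r) - \widetilde{K}_i(r)) r_i$ has a solution defined for all $t \in [0, +\infty)$. -/

import Mathlib

set_option synthInstance.maxHeartbeats 1000000
set_option maxHeartbeats 1000000
open MeasureTheory intervalIntegral Set Filter Topology

namespace Stmt14Aux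

variable {n : ℕ}

noncomputable def eY (g : (Fin n → ℝ) → (Fin n → ℝ)) (u0 : Fin n → ℝ) (h : ℝ) : ℕ → (Fin n → ℝ)
  | 0 => u0
  | (k+1) => eY g u0 h k + h • g (eY g u0 h k)

noncomputable def eV (g : (Fin n → ℝ) → (Fin n → ℝ)) (u0 : Fin n → ℝ) (m : ℕ) (s : ℝ) :
    Fin n → ℝ := eY g u0 (1/(m+1)) ⌊s * (m+1)⌋₊

noncomputable def eX (g : (Fin n → ℝ) → (Fin n → ℝ)) (u0 : Fin n → ℝ) (m : ℕ) (t : ℝ) :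
    Fin n → ℝ := u0 + ∫ s in (0:ℝ)..t, g (eV g u0 m s)

variable {g : (Fin n → ℝ) → (Fin n → ℝ)} {M : ℝ} (hg : Continuous g) (hM : 0 < M)
  (hb : ∀ x, ‖g x‖ ≤ M) {u0 : Fin n → ℝ}

section
include hg

lemma eV_meas (u0 : Fin n → ℝ) (m : ℕ) :
    Measurable (fun s => g (eV g u0 m s)) := by
  apply hg.measurable.comp
  exact (measurable_from_nat (f := eY g u0 (1/(m+1)))).comp
    ((measurable_id.mul_const _).nat_floor)

include hb in
lemma eV_integrable (u0 : Fin n → ℝ) (m : ℕ) (a b : ℝ) :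
    IntervalIntegrable (fun s => g (eV g u0 m s)) volume a b := by
  refine (_root_.intervalIntegrable_const (c := M)).mono_fun
    ((eV_meas hg u0 m).aestronglyMeasurable.restrict) ?_
  exact Filter.Eventually.of_forall fun s => by simpa using (hb _).trans (le_abs_self M)

include hb in
lemma eX_lip (u0 : Fin n → ℝ) (m : ℕ) (a b : ℝ) :
    ‖eX g u0 m b - eX g u0 m a‖ ≤ M * |b - a| := by
  have h1 : eX g u0 m b - eX g u0 m a = ∫ s in a..b, g (eV g u0 m s) := by
    simp only [eX, add_sub_add_left_eq_sub]
    rw [← intervalIntegral.integral_add_adjacent_intervals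
      (eV_integrable hg hb u0 m 0 a) (eV_integrable hg hb u0 m a b)]
    abel
  rw [h1]
  exact intervalIntegral.norm_integral_le_of_norm_le_const fun s _ => hb _

end

lemma integral_eq_const_of_Ioo {f : ℝ → Fin n → ℝ} {a b : ℝ} (hab : a ≤ b) {c : Fin n → ℝ}
    (h : ∀ s ∈ Set.Ioo a b, f s = c) : ∫ s in a..b, f s = (b - a) • c := by
  have h0 : ∀ᵐ s : ℝ, s ≠ b := by
    rw [MeasureTheory.ae_iff]
    simpa using Real.volume_singleton (x := b)
  rw [intervalIntegral.integral_congr_ae (g := fun _ => c) ?_, intervalIntegral.integral_const]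
  filter_upwards [h0] with s hs hmem
  rw [Set.uIoc_of_le hab] at hmem
  exact h s ⟨hmem.1, lt_of_le_of_ne hmem.2 hs⟩

include hg hb in
lemma eX_grid (u0 : Fin n → ℝ) (m : ℕ) (k : ℕ) :
    eX g u0 m ((k : ℝ)/(m+1)) = eY g u0 (1/(m+1)) k := by
  have hm : (0:ℝ) < m + 1 := by positivity
  induction k with
  | zero => simp [eX, eY]
  | succ k ih =>
    have hsplit : eX g u0 m (((k+1 : ℕ) : ℝ)/(m+1)) = eX g u0 m ((k:ℝ)/(m+1)) +
        ∫ s in ((k:ℝ)/(m+1))..(((k+1:ℕ):ℝ)/(m+1)), g (eV g u0 m s) := by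
      simp only [eX]
      rw [← intervalIntegral.integral_add_adjacent_intervals
        (eV_integrable hg hb u0 m 0 ((k:ℝ)/(m+1))) (eV_integrable hg hb u0 m _ _)]
      abel
    have hconst : ∀ s ∈ Set.Ioo ((k:ℝ)/(m+1)) (((k+1:ℕ):ℝ)/(m+1)),
        g (eV g u0 m s) = g (eY g u0 (1/(m+1)) k) := by
      rintro s ⟨h1, h2⟩
      have hs1 : (k:ℝ) < s * (m+1) := by
        rw [div_lt_iff₀ hm] at h1; linarith
      have hs2 : s * (m+1) < (k:ℝ) + 1 := by
        rw [lt_div_iff₀ hm] at h2; push_cast at h2; linarith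
      have hfl : ⌊s * (m+1)⌋₊ = k := by
        rw [Nat.floor_eq_iff (le_trans (by positivity) hs1.le)]
        exact ⟨hs1.le, by exact_mod_cast hs2⟩
      simp [eV, hfl]
    have hle : (k:ℝ)/(m+1) ≤ ((k+1:ℕ):ℝ)/(m+1) := by
      rw [div_le_div_iff_of_pos_right hm]; push_cast; linarith
    rw [hsplit, integral_eq_const_of_Ioo hle hconst, ih]
    have : ((k+1:ℕ):ℝ)/(m+1) - (k:ℝ)/(m+1) = 1/(m+1) := by
      rw [div_sub_div_same]; push_cast; ring_nf
    rw [this]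
    rfl

include hg hb in
lemma eV_close (hM : 0 < M) (u0 : Fin n → ℝ) (m : ℕ) {s : ℝ} (hs : 0 ≤ s) :
    ‖eV g u0 m s - eX g u0 m s‖ ≤ M * (1/(m+1)) := by
  have hm : (0:ℝ) < m + 1 := by positivity
  have h1 : eV g u0 m s = eX g u0 m ((⌊s * (m+1)⌋₊ : ℝ)/(m+1)) := by
    rw [eX_grid hg hb]; rfl
  rw [h1]
  have hsm : (0:ℝ) ≤ s * (m+1) := mul_nonneg hs hm.le
  have h2 : (⌊s * (m+1)⌋₊ : ℝ)/(m+1) ≤ s := by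
    rw [div_le_iff₀ hm]; exact Nat.floor_le hsm
  have h3 : s - (⌊s * (m+1)⌋₊ : ℝ)/(m+1) ≤ 1/(m+1) := by
    have := Nat.lt_floor_add_one (s * (m+1))
    rw [sub_le_iff_le_add, ← add_div, le_div_iff₀ hm]
    linarith
  refine (eX_lip hg hb u0 m s _).trans ?_
  apply mul_le_mul_of_nonneg_left _ (le_of_lt hM)
  rw [abs_sub_comm, abs_of_nonneg (sub_nonneg.2 h2)]
  exact h3


include hg hM hb in
lemma eX_lipschitzWith (u0 : Fin n → ℝ) (m : ℕ) :
    LipschitzWith M.toNNReal (eX g u0 m) := by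
  apply LipschitzWith.of_dist_le_mul
  intro a b
  rw [dist_eq_norm, Real.coe_toNNReal _ hM.le, Real.dist_eq]
  exact eX_lip hg hb u0 m b a

lemma eX_zero (u0 : Fin n → ℝ) (m : ℕ) : eX g u0 m 0 = u0 := by simp [eX]

include hg hM hb in
lemma core (u0 : Fin n → ℝ) : ∃ x : ℝ → (Fin n → ℝ), x 0 = u0 ∧
    ∀ t ∈ Set.Icc (0:ℝ) 1, HasDerivWithinAt x (g (x t)) (Set.Icc 0 1) t := by
  classical
  set I : Set ℝ := Set.Icc (0:ℝ) 1 with hI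
  have hcont : ∀ m, Continuous (eX g u0 m) := fun m => (eX_lipschitzWith hg hM hb u0 m).continuous
  set F : ℕ → BoundedContinuousFunction I (Fin n → ℝ) := fun m =>
    BoundedContinuousFunction.mkOfCompact ⟨fun t => eX g u0 m t, (hcont m).comp continuous_subtype_val⟩ with hF
  have hFval : ∀ m (x : I), F m x = eX g u0 m x := fun m x => rfl
  set A : Set (BoundedContinuousFunction I (Fin n → ℝ)) := Set.range F with hA
  have in_s : ∀ (f : BoundedContinuousFunction I (Fin n → ℝ)) (x : I), f ∈ A →
      f x ∈ Metric.closedBall u0 M := by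
    rintro f x ⟨m, rfl⟩
    rw [Metric.mem_closedBall, hFval, dist_eq_norm]
    have h0 : eX g u0 m 0 = u0 := eX_zero u0 m
    calc ‖eX g u0 m x - u0‖ = ‖eX g u0 m x - eX g u0 m 0‖ := by rw [h0]
    _ ≤ M * |(x:ℝ) - 0| := eX_lip hg hb u0 m 0 x
    _ ≤ M * 1 := by
        apply mul_le_mul_of_nonneg_left _ hM.le
        rw [sub_zero, abs_of_nonneg x.2.1]; exact x.2.2
    _ = M := mul_one M
  have equi : Equicontinuous ((↑) : A → I → (Fin n → ℝ)) := by
    intro x₀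
    rw [Metric.equicontinuousAt_iff]
    intro ε hε
    refine ⟨ε / M, by positivity, fun x hx i => ?_⟩
    obtain ⟨m, hm⟩ := i.2
    rw [← hm, hFval, hFval]
    calc dist (eX g u0 m x₀) (eX g u0 m x) ≤ M * dist (x₀ : ℝ) x := by
          rw [dist_eq_norm, dist_eq_norm, Real.norm_eq_abs]
          exact eX_lip hg hb u0 m x x₀
    _ < M * (ε / M) := by
          apply mul_lt_mul_of_pos_left _ hM
          rw [← Subtype.dist_eq, dist_comm]; exact hx
    _ = ε := by field_simp
  have hcomp : IsCompact (closure A) :=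
    BoundedContinuousFunction.arzela_ascoli (Metric.closedBall u0 M)
      (isCompact_closedBall u0 M) A in_s equi
  obtain ⟨flim, -, φ, hφ, hconv⟩ :=
    hcomp.tendsto_subseq (x := F) (fun m => subset_closure (Set.mem_range_self m))
  have hd : Tendsto (fun k => dist (F (φ k)) flim) atTop (𝓝 0) := by
    rw [← tendsto_iff_dist_tendsto_zero]; exact hconv
  set xlim : ℝ → (Fin n → ℝ) := fun t => flim (Set.projIcc 0 1 zero_le_one t) with hxlim
  have hxlim_cont : Continuous xlim := flim.continuous.comp continuous_projIcc
  have hpt : ∀ t (ht : t ∈ I), Tendsto (fun k => eX g u0 (φ k) t) atTop (𝓝 (xlim t)) := by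
    intro t ht
    have h1 : xlim t = flim ⟨t, ht⟩ := by
      simp only [hxlim]; rw [Set.projIcc_of_mem zero_le_one ht]
    rw [h1, tendsto_iff_dist_tendsto_zero]
    apply squeeze_zero (fun k => dist_nonneg) (g := fun k => dist (F (φ k)) flim)
    · intro k
      exact BoundedContinuousFunction.dist_coe_le_dist (f := F (φ k)) (g := flim) (⟨t, ht⟩ : I)
    · exact hd
  have hVpt : ∀ s, s ∈ I → Tendsto (fun k => eV g u0 (φ k) s) atTop (𝓝 (xlim s)) := by
    intro s hs
    rw [tendsto_iff_dist_tendsto_zero]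
    apply squeeze_zero (fun k => dist_nonneg)
      (g := fun k => M * (1/(φ k + 1)) + dist (F (φ k) ⟨s, hs⟩) (flim ⟨s, hs⟩))
    · intro k
      calc dist (eV g u0 (φ k) s) (xlim s)
          ≤ dist (eV g u0 (φ k) s) (eX g u0 (φ k) s) + dist (eX g u0 (φ k) s) (xlim s) :=
            dist_triangle _ _ _
      _ ≤ M * (1/(φ k + 1)) + dist (F (φ k) ⟨s, hs⟩) (flim ⟨s, hs⟩) := by
            apply add_le_add
            · rw [dist_eq_norm]; exact eV_close hg hb hM u0 (φ k) hs.1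
            · apply le_of_eq
              congr 1
              simp only [hxlim]; rw [Set.projIcc_of_mem zero_le_one hs]
    · rw [show (0:ℝ) = 0 + 0 by ring]
      apply Tendsto.add
      · rw [show (0:ℝ) = M * 0 by ring]
        apply Tendsto.const_mul
        apply Filter.Tendsto.comp (f := fun k => (φ k : ℝ))
          (g := fun y : ℝ => 1/(y+1)) (y := atTop)
        · exact tendsto_const_nhds.div_atTop (tendsto_atTop_add_const_right _ _ tendsto_id)
        · exact tendsto_natCast_atTop_atTop.comp hφ.tendsto_atTop
      · apply squeeze_zero (fun k => dist_nonneg) (g := fun k => dist (F (φ k)) flim)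
        · intro k
          exact BoundedContinuousFunction.dist_coe_le_dist (f := F (φ k)) (g := flim) (⟨s, hs⟩ : I)
        · exact hd
  have hxlim_eq : ∀ t ∈ I, xlim t = u0 + ∫ s in (0:ℝ)..t, g (xlim s) := by
    intro t ht
    refine tendsto_nhds_unique (hpt t ht) ?_
    have : ∀ k, eX g u0 (φ k) t = u0 + ∫ s in (0:ℝ)..t, g (eV g u0 (φ k) s) := fun k => rfl
    simp only [this]
    apply Filter.Tendsto.const_add
    apply intervalIntegral.tendsto_integral_filter_of_dominated_convergence (bound := fun _ => M)
    · exact Filter.Eventually.of_forall fun k => (eV_meas hg u0 (φ k)).aestronglyMeasurable.restrict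
    · exact Filter.Eventually.of_forall fun k =>
        Filter.Eventually.of_forall fun s _ => hb _
    · exact intervalIntegrable_const
    · apply Filter.Eventually.of_forall
      intro s hs
      rw [Set.uIoc_of_le ht.1] at hs
      have hsI : s ∈ I := ⟨hs.1.le, hs.2.trans ht.2⟩
      exact (hg.tendsto _).comp (hVpt s hsI)
  refine ⟨fun t => u0 + ∫ s in (0:ℝ)..t, g (xlim s), by simp, ?_⟩
  intro t ht
  have hD : HasDerivAt (fun t => u0 + ∫ s in (0:ℝ)..t, g (xlim s)) (g (xlim t)) t :=
    (((hg.comp hxlim_cont).integral_hasStrictDerivAt 0 t).hasDerivAt).const_add u0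
  have hEq : ∀ s ∈ I, u0 + ∫ s' in (0:ℝ)..s, g (xlim s') = xlim s := fun s hs =>
    (hxlim_eq s hs).symm
  simpa [hEq t ht] using hD.hasDerivWithinAt (s := I)

include hg hM hb in
lemma forward (u0 : Fin n → ℝ) : ∃ x : ℝ → (Fin n → ℝ), x 0 = u0 ∧
    ∀ t, 0 ≤ t → HasDerivWithinAt x (g (x t)) (Set.Ici 0) t := by
  classical
  let P : (Fin n → ℝ) → (ℝ → Fin n → ℝ) := fun p => Classical.choose (core hg hM hb p)
  have hP0 : ∀ p, P p 0 = p := fun p => (Classical.choose_spec (core hg hM hb p)).1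
  have hPD : ∀ p, ∀ t ∈ Set.Icc (0:ℝ) 1, HasDerivWithinAt (P p) (g (P p t)) (Set.Icc 0 1) t :=
    fun p => (Classical.choose_spec (core hg hM hb p)).2
  let X : ℕ → ℝ → Fin n → ℝ := fun k => Nat.rec (P u0) (fun _ xk => P (xk 1)) k
  have hXs : ∀ k, X (k+1) = P (X k 1) := fun k => rfl
  have hXD : ∀ k, ∀ t ∈ Set.Icc (0:ℝ) 1, HasDerivWithinAt (X k) (g (X k t)) (Set.Icc 0 1) t := by
    intro k
    cases k with
    | zero => exact hPD u0
    | succ k => exact hPD (X k 1)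
  set u : ℝ → Fin n → ℝ := fun t => X ⌊t⌋₊ (t - ⌊t⌋₊) with hu
  have key : ∀ k : ℕ, ∀ t ∈ Set.Icc (k:ℝ) (k+1), u t = X k (t - k) := by
    rintro k t ⟨h1, h2⟩
    rcases lt_or_eq_of_le h2 with hlt | heq
    · have hfl : ⌊t⌋₊ = k := by
        rw [Nat.floor_eq_iff (le_trans (Nat.cast_nonneg k) h1)]
        exact ⟨h1, hlt⟩
      simp only [hu, hfl]
    · have hfl : ⌊t⌋₊ = k + 1 := by
        rw [heq, show ((k:ℝ)+1) = ((k+1:ℕ):ℝ) by push_cast; ring, Nat.floor_natCast]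
      simp only [hu, hfl]
      rw [heq]
      push_cast
      rw [show (k:ℝ) + 1 - ((k:ℝ)+1) = 0 by ring, show (k:ℝ) + 1 - (k:ℝ) = 1 by ring,
        hXs, hP0]
  have piece : ∀ k : ℕ, ∀ t ∈ Set.Icc (k:ℝ) (k+1),
      HasDerivWithinAt u (g (u t)) (Set.Icc (k:ℝ) (k+1)) t := by
    rintro k t ht
    have htk : t - k ∈ Set.Icc (0:ℝ) 1 := ⟨by linarith [ht.1], by linarith [ht.2]⟩
    have base := hXD k (t - k) htk
    have hcomp : HasDerivWithinAt (fun s => X k (s - k)) (g (X k (t - k)))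
        (Set.Icc (k:ℝ) (k+1)) t := by
      have hh : HasDerivWithinAt (fun s : ℝ => s - k) 1 (Set.Icc (k:ℝ) (k+1)) t :=
        ((hasDerivAt_id t).sub_const _).hasDerivWithinAt
      have hmaps : Set.MapsTo (fun s : ℝ => s - k) (Set.Icc (k:ℝ) (k+1)) (Set.Icc 0 1) := by
        intro s hs
        have h1 := hs.1; have h2 := hs.2
        show s - (k:ℝ) ∈ Set.Icc (0:ℝ) 1
        exact ⟨by linarith, by linarith⟩
      simpa [Function.comp_def] using HasDerivWithinAt.scomp t base hh hmaps
    refine (hcomp.congr (fun s hs => key k s hs) (key k t ht)).congr_deriv ?_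
    rw [key k t ht]
  have hu0 : u 0 = u0 := by
    show X ⌊(0:ℝ)⌋₊ ((0:ℝ) - (⌊(0:ℝ)⌋₊:ℝ)) = u0
    rw [Nat.floor_zero]
    simp only [Nat.cast_zero, sub_zero]; exact hP0 u0
  refine ⟨u, hu0, ?_⟩
  intro t ht
  set k := ⌊t⌋₊ with hk
  clear_value k
  have hk1 : (k:ℝ) ≤ t := by rw [hk]; exact Nat.floor_le ht
  have hk2 : t < k + 1 := by rw [hk]; exact Nat.lt_floor_add_one t
  rcases eq_or_lt_of_le hk1 with heq | hlt
  · rcases Nat.eq_zero_or_pos k with hk0 | hkpos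
    · have ht0 : t = 0 := by rw [← heq, hk0, Nat.cast_zero]
      subst ht0
      have h0 := piece 0 0 (by constructor <;> norm_num)
      rw [Nat.cast_zero] at h0
      refine h0.mono_of_mem_nhdsWithin ?_
      rw [show (0:ℝ)+1 = 1 by norm_num,
        ← nhdsWithin_Icc_eq_nhdsGE (zero_lt_one (α := ℝ))]
      exact self_mem_nhdsWithin
    · -- t = k, k ≥ 1 : glue pieces k-1 and k
      obtain ⟨j, rfl⟩ := Nat.exists_eq_succ_of_ne_zero hkpos.ne'
      have hcast : ((j+1:ℕ):ℝ) = (j:ℝ) + 1 := by push_cast; ring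
      have hL := piece j t ⟨by rw [← heq, hcast]; linarith, by rw [← heq, hcast]⟩
      have hR := piece (j+1) t ⟨le_of_eq heq, by linarith⟩
      have hL' : HasDerivWithinAt u (g (u t)) (Set.Iic t) t := by
        refine hL.mono_of_mem_nhdsWithin ?_
        have : t = (j:ℝ) + 1 := by rw [← heq, hcast]
        rw [this]
        rw [show ((j:ℝ)+1) = ((j:ℝ)+1) from rfl]
        have := Icc_mem_nhdsLE (a := (j:ℝ)) (b := (j:ℝ)+1) (by linarith)
        simpa using this
      have hR' : HasDerivWithinAt u (g (u t)) (Set.Ici t) t := by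
        refine hR.mono_of_mem_nhdsWithin ?_
        have htj : t = ((j+1:ℕ):ℝ) := heq.symm
        rw [htj, ← nhdsWithin_Icc_eq_nhdsGE
          (by linarith : ((j+1:ℕ):ℝ) < ((j+1:ℕ):ℝ)+1)]
        exact self_mem_nhdsWithin
      have huniv : HasDerivWithinAt u (g (u t)) (Set.Iic t ∪ Set.Ici t) t := hL'.union hR'
      rw [Set.Iic_union_Ici] at huniv
      exact (hasDerivWithinAt_univ.mp huniv).hasDerivWithinAt
  · have hmem : Set.Icc (k:ℝ) (k+1) ∈ nhds t := Icc_mem_nhds hlt hk2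
    exact ((piece k t ⟨hk1, hk2.le⟩).hasDerivAt hmem).hasDerivWithinAt

include hg hM hb in
lemma globalSol (u0 : Fin n → ℝ) : ∃ x : ℝ → (Fin n → ℝ), x 0 = u0 ∧
    ∀ t, 0 ≤ t → HasDerivAt x (g (x t)) t := by
  obtain ⟨xp, hxp0, hxpD⟩ := forward hg hM hb u0
  have hgneg : Continuous (fun y => -(g y)) := hg.neg
  have hbneg : ∀ y : Fin n → ℝ, ‖-(g y)‖ ≤ M := fun y => by rw [norm_neg]; exact hb y
  obtain ⟨xm, hxm0, hxmD⟩ := forward hgneg hM hbneg u0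
  set x : ℝ → Fin n → ℝ := fun t => if 0 ≤ t then xp t else xm (-t) with hx
  have hxPos : ∀ s : ℝ, 0 ≤ s → x s = xp s := fun s hs => if_pos hs
  have hxNeg : ∀ s : ℝ, s ≤ 0 → x s = xm (-s) := by
    intro s hs
    rcases lt_or_eq_of_le hs with h | h
    · rw [hx]; simp only [not_le.mpr h, if_neg, if_false]
    · subst h
      rw [neg_zero, hxm0, hxPos 0 le_rfl, hxp0]
  refine ⟨x, by rw [hxPos 0 le_rfl]; exact hxp0, ?_⟩
  intro t ht
  rcases eq_or_lt_of_le ht with h0 | hpos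
  · -- t = 0
    have e0 : x 0 = u0 := by rw [hxPos 0 le_rfl]; exact hxp0
    have hR : HasDerivWithinAt x (g u0) (Set.Ici 0) 0 := by
      have := (hxpD 0 le_rfl).congr (fun s hs => hxPos s hs) (hxPos 0 le_rfl)
      rwa [hxp0] at this
    have hL : HasDerivWithinAt x (g u0) (Set.Iic 0) 0 := by
      have hm := hxmD 0 le_rfl
      rw [hxm0] at hm
      have hneg : HasDerivWithinAt (fun s : ℝ => -s) (-1) (Set.Iic 0) 0 :=
        (hasDerivAt_neg (0:ℝ)).hasDerivWithinAt
      have hmaps : Set.MapsTo (fun s : ℝ => -s) (Set.Iic 0) (Set.Ici 0) :=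
        fun s hs => Set.mem_Ici.2 (neg_nonneg.2 (Set.mem_Iic.1 hs))
      have hm' : HasDerivWithinAt xm (-(g u0)) (Set.Ici 0) ((fun s : ℝ => -s) 0) := by
        simpa using hm
      have hcomp := HasDerivWithinAt.scomp 0 hm' hneg hmaps
      simp only [neg_smul, one_smul, neg_neg] at hcomp
      refine hcomp.congr (fun s hs => hxNeg s hs) ?_
      rw [hxNeg 0 le_rfl]
      rfl
    have huniv := hL.union hR
    rw [Set.Iic_union_Ici] at huniv
    have hDA := hasDerivWithinAt_univ.mp huniv
    subst h0
    rwa [← e0] at hDA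
  · have hD : HasDerivAt xp (g (xp t)) t := (hxpD t hpos.le).hasDerivAt (Ici_mem_nhds hpos)
    have hev : x =ᶠ[nhds t] xp :=
      Filter.eventuallyEq_of_mem (Ioi_mem_nhds hpos) (fun s hs => hxPos s (le_of_lt hs))
    have := hD.congr_of_eventuallyEq hev
    rwa [← hxPos t ht] at this

end Stmt14Aux

theorem stmt14 (N : ℕ) (C : ℝ) (hC : 0 < C)
    (K : (Fin N → ℝ) → Fin N → ℝ) (hK : Continuous K)
    (hbound : ∀ x i, |K x i| ≤ C)
    (r0 : Fin N → ℝ) (h0 : ∀ i, 0 < r0 i) :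
    ∃ r : ℝ → Fin N → ℝ, r 0 = r0 ∧ (∀ t, 0 ≤ t → ∀ i, 0 < r t i) ∧
      ∀ t, 0 ≤ t → ∀ i, HasDerivAt (fun s => r s i)
        (((∑ j, K (r t) j * r t j) / (∑ j, r t j) - K (r t) i) * r t i) t := by
  rcases Nat.eq_zero_or_pos N with hN | hN
  · subst hN
    exact ⟨fun _ => r0, rfl, fun t _ i => i.elim0, fun t _ i => i.elim0⟩
  · haveI : Nonempty (Fin N) := ⟨⟨0, hN⟩⟩
    set ex : (Fin N → ℝ) → (Fin N → ℝ) := fun u j => Real.exp (u j) with hex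
    have hexc : Continuous ex := continuous_pi fun j =>
      Real.continuous_exp.comp (continuous_apply j)
    have hexpos : ∀ u j, 0 < ex u j := fun u j => Real.exp_pos _
    have hsumpos : ∀ u : Fin N → ℝ, 0 < ∑ j, ex u j := fun u =>
      Finset.sum_pos (fun j _ => hexpos u j) Finset.univ_nonempty
    set g : (Fin N → ℝ) → (Fin N → ℝ) := fun u i =>
      (∑ j, K (ex u) j * ex u j) / (∑ j, ex u j) - K (ex u) i with hgdef
    have hg : Continuous g := by
      apply continuous_pi
      intro i
      apply Continuous.sub
      · apply Continuous.div
        · exact continuous_finset_sum _ fun j _ =>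
            ((continuous_apply j).comp (hK.comp hexc)).mul ((continuous_apply j).comp hexc)
        · exact continuous_finset_sum _ fun j _ => (continuous_apply j).comp hexc
        · exact fun u => (hsumpos u).ne'
      · exact (continuous_apply i).comp (hK.comp hexc)
    have hgb : ∀ u, ‖g u‖ ≤ 2*C := by
      intro u
      rw [pi_norm_le_iff_of_nonneg (by linarith)]
      intro i
      rw [Real.norm_eq_abs]
      have h1 : |(∑ j, K (ex u) j * ex u j) / (∑ j, ex u j)| ≤ C := by
        rw [abs_div, abs_of_pos (hsumpos u), div_le_iff₀ (hsumpos u)]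
        calc |∑ j, K (ex u) j * ex u j| ≤ ∑ j, |K (ex u) j * ex u j| :=
              Finset.abs_sum_le_sum_abs _ _
        _ ≤ ∑ j, C * ex u j := by
              apply Finset.sum_le_sum
              intro j _
              rw [abs_mul, abs_of_pos (hexpos u j)]
              exact mul_le_mul_of_nonneg_right (hbound _ j) (hexpos u j).le
        _ = C * ∑ j, ex u j := by rw [Finset.mul_sum]
      have h2 := hbound (ex u) i
      calc |g u i| = |(∑ j, K (ex u) j * ex u j) / (∑ j, ex u j) + (-(K (ex u) i))| := by
            show |(∑ j, K (ex u) j * ex u j) / (∑ j, ex u j) - K (ex u) i| = _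
            rw [sub_eq_add_neg]
      _ ≤ |(∑ j, K (ex u) j * ex u j) / (∑ j, ex u j)| + |(-(K (ex u) i))| := abs_add_le _ _
      _ ≤ C + C := by rw [abs_neg]; exact add_le_add h1 h2
      _ = 2*C := by ring
    obtain ⟨u, hu0, huD⟩ := Stmt14Aux.globalSol hg (by linarith : (0:ℝ) < 2*C) hgb
      (fun i => Real.log (r0 i))
    refine ⟨fun t => ex (u t), ?_, fun t _ i => Real.exp_pos _, ?_⟩
    · funext i
      show Real.exp (u 0 i) = r0 i
      rw [hu0]
      exact Real.exp_log (h0 i)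
    · intro t ht i
      have hd := huD t ht
      have hdi : HasDerivAt (fun s => u s i) (g (u t) i) t := by
        have := ((ContinuousLinearMap.proj (R := ℝ) (φ := fun _ : Fin N => ℝ)
          i).hasFDerivAt (x := u t)).comp_hasDerivAt t hd
        exact this
      have hde := hdi.exp
      have hval : ((∑ j, K (ex (u t)) j * ex (u t) j) / (∑ j, ex (u t) j) - K (ex (u t)) i)
          * ex (u t) i = Real.exp (u t i) * g (u t) i := mul_comm _ _
      rw [hval]
      exact hde
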